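/- Let m_Γ > 0, let Γ: ℝ^{nμ} → [m_Γ, ∞) be continuous, w ∈ ℝ^μ nonzero, and let for each z ∈ ℝⁿ \ {0} a random vector A(z) ∈ ℝ^{nμ} be given with ‖∑_{i=1}^μ w_i A(z)_i‖ ≤ ‖w‖·‖U‖ almost surely for a fixed integrable random variable ‖U‖ ≥ 0. Set Z₁(z) = (z + ∑_i w_i A(z)_i)/Γ(A(z)). Then for every α > 0, E[‖Z₁(z)‖^α]/‖z‖^α − E[1/Γ(A(z))^α] → 0 as ‖z‖ → ∞. -/

import Mathlib

open MeasureTheory Filter Topology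

/-- The key dominated-convergence step: with `Γ` continuous and bounded below by
`m_Γ > 0`, `Z₁(z) = (z + ∑ᵢ wᵢ A(z)ᵢ)/Γ(A(z))` and
`‖∑ᵢ wᵢ A(z)ᵢ‖ ≤ ‖w‖ ‖U‖` a.s. for an integrable `‖U‖ ≥ 0` (with the relevant
power integrable), for every `α > 0`,
`E[‖Z₁(z)‖^α]/‖z‖^α − E[Γ(A(z))^{−α}] → 0` as `‖z‖ → ∞`. -/
theorem ratio_moment_tendsto {Ω : Type*} [MeasurableSpace Ω]
    (P : Measure Ω) [IsProbabilityMeasure P] (n mu : ℕ)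
    (mΓ : ℝ) (hmΓ : 0 < mΓ)
    (Γ : (Fin mu → EuclideanSpace ℝ (Fin n)) → ℝ)
    (hΓcont : Continuous Γ) (hΓlb : ∀ v, mΓ ≤ Γ v)
    (w : Fin mu → ℝ) (hw : w ≠ 0)
    (A : EuclideanSpace ℝ (Fin n) → Ω → Fin mu → EuclideanSpace ℝ (Fin n))
    (hAmeas : ∀ z, Measurable (A z))
    (U : Ω → ℝ) (hU0 : ∀ ω, 0 ≤ U ω) (hUint : Integrable U P)
    (hbound : ∀ z, ∀ᵐ ω ∂P,
      ‖∑ i, w i • A z ω i‖ ≤ Real.sqrt (∑ i, w i ^ 2) * U ω)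
    (α : ℝ) (hα : 0 < α)
    (hαint : Integrable (fun ω => (1 + Real.sqrt (∑ i, w i ^ 2) * U ω) ^ α) P) :
    Tendsto
      (fun z : EuclideanSpace ℝ (Fin n) =>
        (∫ ω, ‖(Γ (A z ω))⁻¹ • (z + ∑ i, w i • A z ω i)‖ ^ α ∂P) / ‖z‖ ^ α
          - ∫ ω, (Γ (A z ω)) ^ (-α : ℝ) ∂P)
      (comap norm atTop) (nhds 0) := by
  set c : ℝ := Real.sqrt (∑ i, w i ^ 2) with hc_def
  have hc : 0 ≤ c := Real.sqrt_nonneg _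
  have hcU : ∀ ω, 0 ≤ c * U ω := fun ω => mul_nonneg hc (hU0 ω)
  have hUm : AEMeasurable U P := hUint.aemeasurable
  set g : ℝ → Ω → ℝ :=
    fun r ω => (1 + c * U ω / r) ^ α - (max 0 (1 - c * U ω / r)) ^ α with hg_def
  have hg_nonneg : ∀ r ω, 0 ≤ r → 0 ≤ g r ω := by
    intro r ω hr
    have ht : 0 ≤ c * U ω / r := div_nonneg (hcU ω) hr
    have h1 : max 0 (1 - c * U ω / r) ≤ 1 + c * U ω / r :=
      max_le (by linarith) (by linarith)
    have h2 := Real.rpow_le_rpow (le_max_left _ _) h1 hα.le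
    simpa [hg_def] using sub_nonneg.2 h2
  have hg_le : ∀ r ω, 1 ≤ r → g r ω ≤ (1 + c * U ω) ^ α := by
    intro r ω hr
    have hr0 : (0:ℝ) ≤ r := by linarith
    have ht0 : 0 ≤ c * U ω / r := div_nonneg (hcU ω) hr0
    have ht : c * U ω / r ≤ c * U ω := div_le_self (hcU ω) hr
    have h1 : (1 + c * U ω / r) ^ α ≤ (1 + c * U ω) ^ α :=
      Real.rpow_le_rpow (by linarith) (by linarith) hα.le
    have h2 : (0:ℝ) ≤ (max 0 (1 - c * U ω / r)) ^ α :=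
      Real.rpow_nonneg (le_max_left _ _) _
    simp only [hg_def]
    linarith
  have hgm : ∀ r : ℝ, AEStronglyMeasurable (g r) P := by
    intro r
    have h1 : AEMeasurable (fun ω => c * U ω / r) P := (hUm.const_mul c).div_const r
    have h2 : AEMeasurable (fun ω => (1 + c * U ω / r) ^ α) P :=
      (aemeasurable_const.add h1).pow_const α
    have h3 : AEMeasurable (fun ω => (max 0 (1 - c * U ω / r)) ^ α) P :=
      (aemeasurable_const.max (aemeasurable_const.sub h1)).pow_const α
    exact (h2.sub h3).aestronglyMeasurable
  have hg_int : ∀ r : ℝ, 1 ≤ r → Integrable (g r) P := by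
    intro r hr
    refine hαint.mono' (hgm r) (Eventually.of_forall fun ω => ?_)
    rw [Real.norm_eq_abs, abs_of_nonneg (hg_nonneg r ω (by linarith))]
    exact hg_le r ω hr
  -- dominated convergence in the scalar parameter r
  have hg0 : Tendsto (fun r : ℝ => ∫ ω, g r ω ∂P) atTop (𝓝 0) := by
    have hlim : ∀ ω, Tendsto (fun r : ℝ => g r ω) atTop (𝓝 0) := by
      intro ω
      have ht : Tendsto (fun r : ℝ => c * U ω / r) atTop (𝓝 0) :=
        tendsto_const_nhds.div_atTop tendsto_id
      have hco : ContinuousAt (fun x : ℝ => x ^ α) 1 :=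
        Real.continuousAt_rpow_const 1 α (Or.inr hα.le)
      have h1 : Tendsto (fun r : ℝ => (1 + c * U ω / r) ^ α) atTop (𝓝 (1:ℝ)) := by
        have h := hco.tendsto.comp (by simpa using tendsto_const_nhds.add ht :
          Tendsto (fun r : ℝ => 1 + c * U ω / r) atTop (𝓝 (1:ℝ)))
        simpa [Real.one_rpow, Function.comp_def] using h
      have h2 : Tendsto (fun r : ℝ => (max 0 (1 - c * U ω / r)) ^ α) atTop (𝓝 (1:ℝ)) := by
        have hm : Tendsto (fun r : ℝ => max 0 (1 - c * U ω / r)) atTop (𝓝 (1:ℝ)) := by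
          have hmm : Tendsto (fun r : ℝ => max 0 (1 - c * U ω / r)) atTop
              (𝓝 (max (0:ℝ) (1 - 0))) :=
            tendsto_const_nhds.max (tendsto_const_nhds.sub ht)
          simpa using hmm
        have h := hco.tendsto.comp hm
        simpa [Real.one_rpow, Function.comp_def] using h
      simpa [hg_def] using h1.sub h2
    have h := tendsto_integral_filter_of_dominated_convergence
      (μ := P) (F := g) (f := fun _ => (0:ℝ))
      (bound := fun ω => (1 + c * U ω) ^ α)
      (Eventually.of_forall hgm)
      (by
        filter_upwards [eventually_ge_atTop (1:ℝ)] with r hr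
        refine Eventually.of_forall fun ω => ?_
        rw [Real.norm_eq_abs, abs_of_nonneg (hg_nonneg r ω (by linarith))]
        exact hg_le r ω hr)
      hαint
      (Eventually.of_forall hlim)
    simpa using h
  have hnorm : Tendsto (fun z : EuclideanSpace ℝ (Fin n) => ‖z‖)
      (comap norm atTop) atTop := tendsto_comap
  refine squeeze_zero_norm' ?_ ?_
    (a := fun z : EuclideanSpace ℝ (Fin n) => mΓ ^ (-α) * ∫ ω, g ‖z‖ ω ∂P)
  · -- the eventual bound
    filter_upwards [hnorm.eventually_ge_atTop 1] with z hz
    have hr0 : (0:ℝ) < ‖z‖ := lt_of_lt_of_le one_pos hz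
    set r : ℝ := ‖z‖ with hr_def
    set S : Ω → EuclideanSpace ℝ (Fin n) := fun ω => ∑ i, w i • A z ω i with hS_def
    have hSm : Measurable S := by
      apply Finset.measurable_sum
      intro i _
      exact ((measurable_pi_apply i).comp (hAmeas z)).const_smul (w i)
    have hΓm : Measurable (fun ω => Γ (A z ω)) := hΓcont.measurable.comp (hAmeas z)
    have hΓpos : ∀ ω, 0 < Γ (A z ω) := fun ω => lt_of_lt_of_le hmΓ (hΓlb _)
    have hΓle : ∀ ω, (Γ (A z ω)) ^ (-α) ≤ mΓ ^ (-α) := fun ω =>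
      Real.rpow_le_rpow_of_nonpos hmΓ (hΓlb _) (neg_nonpos.2 hα.le)
    have hΓnn : ∀ ω, 0 ≤ (Γ (A z ω)) ^ (-α) := fun ω =>
      Real.rpow_nonneg (hΓpos ω).le _
    have hFeq : ∀ ω, ‖(Γ (A z ω))⁻¹ • (z + S ω)‖ ^ α
        = (Γ (A z ω)) ^ (-α) * ‖z + S ω‖ ^ α := by
      intro ω
      rw [norm_smul, Real.norm_eq_abs, abs_of_pos (inv_pos.2 (hΓpos ω)),
        Real.mul_rpow (inv_nonneg.2 (hΓpos ω).le) (norm_nonneg _),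
        Real.inv_rpow (hΓpos ω).le, ← Real.rpow_neg (hΓpos ω).le]
    have hGm : AEStronglyMeasurable (fun ω => (Γ (A z ω)) ^ (-α)) P :=
      (hΓm.pow_const (-α)).aestronglyMeasurable
    have hGint : Integrable (fun ω => (Γ (A z ω)) ^ (-α)) P := by
      refine (integrable_const (mΓ ^ (-α))).mono' hGm (Eventually.of_forall fun ω => ?_)
      rw [Real.norm_eq_abs, abs_of_nonneg (hΓnn ω)]
      exact hΓle ω
    have hF'm : AEStronglyMeasurable (fun ω => (Γ (A z ω)) ^ (-α) * ‖z + S ω‖ ^ α) P :=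
      ((hΓm.pow_const (-α)).mul
        (((measurable_const.add hSm).norm).pow_const α)).aestronglyMeasurable
    have hSb := hbound z
    have hF'int : Integrable (fun ω => (Γ (A z ω)) ^ (-α) * ‖z + S ω‖ ^ α) P := by
      refine (hαint.const_mul (mΓ ^ (-α) * r ^ α)).mono' hF'm ?_
      filter_upwards [hSb] with ω hb
      rw [Real.norm_eq_abs,
        abs_of_nonneg (mul_nonneg (hΓnn ω) (Real.rpow_nonneg (norm_nonneg _) _))]
      have h1 : ‖z + S ω‖ ≤ r + c * U ω := by
        have := norm_add_le z (S ω)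
        simp only [hS_def] at hb ⊢
        linarith
      have h2 : r + c * U ω ≤ r * (1 + c * U ω) := by nlinarith [hcU ω]
      have h3 : ‖z + S ω‖ ^ α ≤ (r * (1 + c * U ω)) ^ α :=
        Real.rpow_le_rpow (norm_nonneg _) (h1.trans h2) hα.le
      have h4 : (r * (1 + c * U ω)) ^ α = r ^ α * (1 + c * U ω) ^ α :=
        Real.mul_rpow hr0.le (by linarith [hcU ω])
      calc (Γ (A z ω)) ^ (-α) * ‖z + S ω‖ ^ α
          ≤ mΓ ^ (-α) * (r ^ α * (1 + c * U ω) ^ α) := by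
            refine mul_le_mul (hΓle ω) (by rw [← h4]; exact h3)
              (Real.rpow_nonneg (norm_nonneg _) _)
              (le_of_lt (Real.rpow_pos_of_pos hmΓ _))
        _ = mΓ ^ (-α) * r ^ α * (1 + c * U ω) ^ α := by ring
    -- rewrite the difference of integrals as a single integral
    simp only [show ∀ ω, ‖(Γ (A z ω))⁻¹ • (z + ∑ i, w i • A z ω i)‖ ^ α
        = (Γ (A z ω)) ^ (-α) * ‖z + S ω‖ ^ α from hFeq]
    rw [← integral_div, ← integral_sub (hF'int.div_const _) hGint,
      ← integral_const_mul]
    refine norm_integral_le_of_norm_le ((hg_int r hz).const_mul _) ?_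
    filter_upwards [hSb] with ω hb
    have hb' : ‖S ω‖ ≤ c * U ω := hb
    set t : ℝ := c * U ω / r with ht_def
    have ht0 : 0 ≤ t := div_nonneg (hcU ω) hr0.le
    have hseq : (Γ (A z ω)) ^ (-α) * ‖z + S ω‖ ^ α / r ^ α - (Γ (A z ω)) ^ (-α)
        = (Γ (A z ω)) ^ (-α) * ((‖z + S ω‖ / r) ^ α - 1) := by
      rw [mul_div_assoc, ← Real.div_rpow (norm_nonneg _) hr0.le]
      ring
    rw [hseq, Real.norm_eq_abs, abs_mul, abs_of_nonneg (hΓnn ω)]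
    have hsub : |(‖z + S ω‖ / r) ^ α - 1| ≤ g r ω := by
      set s : ℝ := ‖z + S ω‖ / r with hs_def
      have hs0 : 0 ≤ s := div_nonneg (norm_nonneg _) hr0.le
      have e1 : s * r = ‖z + S ω‖ := div_mul_cancel₀ _ hr0.ne'
      have e2 : t * r = c * U ω := div_mul_cancel₀ _ hr0.ne'
      have htri1 : ‖z + S ω‖ ≤ r + ‖S ω‖ := by
        have := norm_add_le z (S ω); linarith [this]
      have htri2 : r - ‖S ω‖ ≤ ‖z + S ω‖ := by
        have h := norm_add_le (z + S ω) (-S ω)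
        simp only [add_neg_cancel_right, norm_neg] at h
        linarith [h]
      have hub : s ≤ 1 + t := by nlinarith [hr0, e1, e2, htri1, hb']
      have hlb : 1 - t ≤ s := by nlinarith [hr0, e1, e2, htri2, hb']
      have hub' : s ^ α ≤ (1 + t) ^ α := Real.rpow_le_rpow hs0 hub hα.le
      have hlb' : (max 0 (1 - t)) ^ α ≤ s ^ α :=
        Real.rpow_le_rpow (le_max_left _ _) (max_le hs0 hlb) hα.le
      have hmax1 : (max 0 (1 - t)) ^ α ≤ 1 := by
        have h1 : max 0 (1 - t) ≤ 1 := max_le zero_le_one (by linarith)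
        calc (max 0 (1 - t)) ^ α ≤ 1 ^ α :=
              Real.rpow_le_rpow (le_max_left _ _) h1 hα.le
          _ = 1 := Real.one_rpow _
      have h1t : 1 ≤ (1 + t) ^ α := by
        calc (1:ℝ) = 1 ^ α := (Real.one_rpow _).symm
          _ ≤ (1 + t) ^ α := Real.rpow_le_rpow zero_le_one (by linarith) hα.le
      have hgval : g r ω = (1 + t) ^ α - (max 0 (1 - t)) ^ α := by
        simp only [hg_def, ht_def]
      rw [hgval, abs_sub_le_iff]
      constructor <;> linarith
    exact mul_le_mul (hΓle ω) hsub (abs_nonneg _) (Real.rpow_nonneg hmΓ.le _)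
  · have h := (hg0.comp hnorm).const_mul (mΓ ^ (-α))
    rw [mul_zero] at h
    exact h
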